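/- Let T be a locally finite rooted tree directed toward its root, c : V(T) → ℕ, and let X be an edge set that is legal for c. Then there exists a rayless edge set X' ⊆ X such that (1) A(v, X') ≥ c(v) for every vertex v with A(v, X) ≥ c(v), and (2) A(v, X') = A(v, X) for every terminal vertex v of X (i.e., every vertex at which no edge of X starts). -/

import Mathlib

open Classical

/-- A (possibly infinite) locally finite tree with all edges directed toward the
root: each non-root vertex `v` has a unique outgoing edge `v → parent v`,
encoded by its tail `v`. -/
structure RTree (V : Type*) where
  root : V
  parent : V → V
  parent_root : parent root = root
  reaches : ∀ v, ∃ n : ℕ, parent^[n] v = root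
  locFin : ∀ v, {s | parent s = v ∧ s ≠ root}.Finite

namespace RTree

variable {V : Type*} (T : RTree V)

/-- The upward neighbours of `v`. -/
def children (v : V) : Set V := {s | T.parent s = v ∧ s ≠ T.root}

/-- A leaf is a vertex with no incoming edges. -/
def IsLeaf (v : V) : Prop := T.children v = ∅

/-- `A(v, X)`: in-degree minus out-degree of `v` in the edge set `X`
(edges being encoded by their tails). -/
noncomputable def A (X : Set V) (v : V) : ℤ :=
  ((T.children v ∩ X).ncard : ℤ) - (if v ∈ X ∧ v ≠ T.root then 1 else 0)

/-- `A(v, X, Y) = A(v, X) - A(v, Y)`. -/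
noncomputable def A2 (X Y : Set V) (v : V) : ℤ := T.A X v - T.A Y v

/-- `V(X)`: the vertices incident with an edge of `X`. -/
def VX (X : Set V) : Set V := X ∪ T.parent '' X

/-- `ter X`: the vertices at which no edge of `X` starts. -/
def ter (X : Set V) : Set V := {v | v ∉ X ∨ v = T.root}

/-- An edge set is rayless if it contains no ray of `T`. -/
def Rayless (X : Set V) : Prop :=
  ¬ ∃ f : ℕ → V, (∀ n, f n ∈ X) ∧ ∀ n, T.parent (f (n + 1)) = f n

/-- A leafless forest: every vertex of `V(S)` has an incoming `S`-edge. -/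
def Leafless (S : Set V) : Prop :=
  ∀ v ∈ T.VX S, ∃ s ∈ S, T.parent s = v

/-- The flow `b(X)` to `X` from the leaf set `B`: the union of the edge sets of
those paths starting at a leaf in `B` all of whose interior vertices are not
incident with an edge from `X`. -/
def flow (B X : Set V) : Set V :=
  {e | e ≠ T.root ∧ ∃ b ∈ B, ∃ n : ℕ, T.parent^[n] b = e ∧
    ∀ k, 1 ≤ k → k ≤ n → T.parent^[k] b ∉ T.VX X}

end RTree

namespace RTree

variable {V : Type*} (T : RTree V)

/-- `S` is illegal for `c` (as a subset of `X`): `S` is a nonempty leafless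
forest with `S ⊆ X` and `A(s, X \ S) ≤ c s` for every edge `st ∈ S`. -/
def Illegal (X : Set V) (c : V → ℤ) (S : Set V) : Prop :=
  S.Nonempty ∧ S ⊆ X ∧ T.Leafless S ∧ ∀ s ∈ S, T.A (X \ S) s ≤ c s

/-- `X` is legal for `c`: no nonempty subset of `X` is illegal for `c`. -/
def Legal (X : Set V) (c : V → ℤ) : Prop := ¬ ∃ S, T.Illegal X c S

end RTree

namespace Stmt9Aux

variable {V : Type*}

/-- One step of the "good edge" operator. -/
def Psi (T : RTree V) (c : V → ℕ) (X : Set V) (G : Set V) : Set V :=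
  {e | e ∈ X ∧ ((T.children e ∩ X ⊆ G) ∨ c e + 1 ≤ (T.children e ∩ X ∩ G).ncard)}

/-- The stages of the least fixed point. -/
def Gs (T : RTree V) (c : V → ℕ) (X : Set V) : ℕ → Set V :=
  fun n => (Psi T c X)^[n] ∅

end Stmt9Aux
/-- If `X` is legal for `c`, then there is a rayless `X' ⊆ X`
such that (1) `A(v, X') ≥ c v` for every `v` with `A(v, X) ≥ c v`, and
(2) `A(v, X') = A(v, X)` for every terminal vertex `v` of `X`. -/
theorem stmt9 {V : Type*} (T : RTree V) (c : V → ℕ) (X : Set V)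
    (hX : T.root ∉ X) (hlegal : T.Legal X (fun v => (c v : ℤ))) :
    ∃ X' : Set V, X' ⊆ X ∧ T.Rayless X' ∧
      (∀ v, (c v : ℤ) ≤ T.A X v → (c v : ℤ) ≤ T.A X' v) ∧
      (∀ v ∈ T.ter X, T.A X' v = T.A X v) := by
  classical
  have chfin : ∀ v : V, (T.children v ∩ X).Finite :=
    fun v => (T.locFin v).inter_of_left X
  set Psi := Stmt9Aux.Psi T c X with hPsidef
  set G := Stmt9Aux.Gs T c X with hGdef
  have PsiMono : ∀ {A B : Set V}, A ⊆ B → Psi A ⊆ Psi B := by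
    intro A B hAB e he
    obtain ⟨heX, hd⟩ := he
    refine ⟨heX, ?_⟩
    rcases hd with h | h
    · exact Or.inl (h.trans hAB)
    · exact Or.inr (h.trans (Set.ncard_le_ncard
        (Set.inter_subset_inter_right _ hAB) ((chfin e).inter_of_left _)))
  have hG0 : G 0 = ∅ := rfl
  have hGsucc : ∀ n, G (n + 1) = Psi (G n) :=
    fun n => Function.iterate_succ_apply' (Psi) n ∅
  have Gstep : ∀ n, G n ⊆ G (n + 1) := by
    intro n
    induction n with
    | zero => rw [hG0]; exact Set.empty_subset _
    | succ k ih => rw [hGsucc, hGsucc]; exact PsiMono ih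
  have Gmono : ∀ {n m : ℕ}, n ≤ m → G n ⊆ G m := by
    intro n m h
    induction h with
    | refl => exact Set.Subset.rfl
    | step _ ih => exact ih.trans (Gstep _)
  -- a finite set each of whose members is good is contained in a single stage
  have absorb : ∀ s : Set V, s.Finite → (∀ x ∈ s, ∃ n, x ∈ G n) → ∃ N, s ⊆ G N := by
    intro s hs
    refine Set.Finite.induction_on (motive := fun s _ => (∀ x ∈ s, ∃ n, x ∈ G n) → ∃ N, s ⊆ G N) s hs (fun _ => ⟨0, Set.empty_subset _⟩) ?_
    intro a t ha ht ih hall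
    obtain ⟨N1, hN1⟩ := ih (fun x hx => hall x (Set.mem_insert_of_mem _ hx))
    obtain ⟨N2, hN2⟩ := hall a (Set.mem_insert _ _)
    refine ⟨max N1 N2, ?_⟩
    intro x hx
    rcases hx with rfl | hx
    · exact Gmono (le_max_right _ _) hN2
    · exact Gmono (le_max_left _ _) (hN1 hx)
  -- legality: every edge of X is good
  have good : ∀ x ∈ X, ∃ n, x ∈ G n := by
    by_contra hbad
    push_neg at hbad
    obtain ⟨x0, hx0X, hx0⟩ := hbad
    set Bad : Set V := {x | x ∈ X ∧ ∀ n, x ∉ G n} with hBadDef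
    apply hlegal
    refine ⟨Bad, ⟨x0, hx0X, hx0⟩, fun x hx => hx.1, ?_, ?_⟩
    · -- leafless
      intro v hv
      rw [RTree.VX, Set.mem_union] at hv
      rcases hv with hv | ⟨s, hs, rfl⟩
      · by_contra hno
        push_neg at hno
        have hsub : ∀ x ∈ T.children v ∩ X, ∃ n, x ∈ G n := by
          intro x hx
          by_contra hxn
          push_neg at hxn
          exact hno x ⟨hx.2, hxn⟩ hx.1.1
        obtain ⟨N, hN⟩ := absorb _ (chfin v) hsub
        exact hv.2 (N + 1) (by rw [hGsucc]; exact ⟨hv.1, Or.inl hN⟩)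
      · exact ⟨s, hs, rfl⟩
    · -- degree bound
      intro s hs
      rw [RTree.A, if_neg (fun h : s ∈ X \ Bad ∧ s ≠ T.root => h.1.2 hs)]
      by_contra hgt
      push_neg at hgt
      have h1 : c s + 1 ≤ (T.children s ∩ (X \ Bad)).ncard := by
        have : (c s : ℤ) < ((T.children s ∩ (X \ Bad)).ncard : ℤ) := by linarith
        exact_mod_cast this
      have hsub : ∀ x ∈ T.children s ∩ (X \ Bad), ∃ n, x ∈ G n := by
        intro x hx
        by_contra hxn
        push_neg at hxn
        exact hx.2.2 ⟨hx.2.1, hxn⟩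
      obtain ⟨N, hN⟩ := absorb _ ((T.locFin s).inter_of_left _) hsub
      have hmem : s ∈ G (N + 1) := by
        rw [hGsucc]
        refine ⟨hs.1, Or.inr (h1.trans (Set.ncard_le_ncard ?_ ((chfin s).inter_of_left _)))⟩
        exact fun x hx => ⟨⟨hx.1, hx.2.1⟩, hN hx⟩
      exact hs.2 (N + 1) hmem
  -- the rank function
  set rho : V → ℕ := fun x => sInf {n | x ∈ G n} with hrhoDef
  have rho_mem : ∀ x ∈ X, x ∈ G (rho x) := fun x hx => Nat.sInf_mem (good x hx)
  have rho_le : ∀ x n, x ∈ G n → rho x ≤ n := fun x n h => Nat.sInf_le h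
  have rho_pos : ∀ x ∈ X, ∃ m, rho x = m + 1 ∧ x ∈ Psi (G m) := by
    intro x hx
    have h := rho_mem x hx
    rcases hn : rho x with _ | m
    · rw [hn, hG0] at h
      exact absurd h (Set.notMem_empty x)
    · rw [hn, hGsucc] at h
      exact ⟨m, rfl, h⟩
  -- the rayless subset
  set X' : Set V :=
    {x | x ∈ X ∧ (T.parent x ∉ X ∨ T.parent x = T.root ∨ rho x < rho (T.parent x))}
    with hX'Def
  have hsubX : X' ⊆ X := fun x hx => hx.1
  have hkey : ∀ v, (v ∉ X ∨ v = T.root) → T.children v ∩ X' = T.children v ∩ X := by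
    intro v hv
    refine Set.Subset.antisymm (Set.inter_subset_inter_right _ hsubX) ?_
    intro x hx
    refine ⟨hx.1, hx.2, ?_⟩
    rcases hv with h | h
    · exact Or.inl (by rw [hx.1.1]; exact h)
    · exact Or.inr (Or.inl (hx.1.1.trans h))
  have hter : ∀ v ∈ T.ter X, T.A X' v = T.A X v := by
    intro v hv
    have hv' : v ∉ X ∨ v = T.root := hv
    rw [RTree.A, RTree.A, hkey v hv']
    congr 1
    rcases hv' with h | h
    · rw [if_neg (fun hc : v ∈ X' ∧ v ≠ T.root => h (hsubX hc.1)),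
        if_neg (fun hc : v ∈ X ∧ v ≠ T.root => h hc.1)]
    · rw [if_neg (fun hc : v ∈ X' ∧ v ≠ T.root => hc.2 h),
        if_neg (fun hc : v ∈ X ∧ v ≠ T.root => hc.2 h)]
  refine ⟨X', hsubX, ?_, ?_, hter⟩
  · -- rayless
    rintro ⟨f, hf1, hf2⟩
    have hdec : ∀ n, rho (f (n + 1)) < rho (f n) := by
      intro n
      rcases (hf1 (n + 1)).2 with h | h | h
      · rw [hf2 n] at h
        exact absurd (hsubX (hf1 n)) h
      · rw [hf2 n] at h
        exact absurd (h ▸ hsubX (hf1 n)) hX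
      · rw [hf2 n] at h
        exact h
    have hb : ∀ n, rho (f n) + n ≤ rho (f 0) := by
      intro n
      induction n with
      | zero => simp
      | succ k ih => have := hdec k; omega
    have := hb (rho (f 0) + 1)
    omega
  · -- condition (1)
    intro v hv
    by_cases hcase : v ∈ X ∧ v ≠ T.root
    · obtain ⟨hvX, hvroot⟩ := hcase
      obtain ⟨m, hm, hPm⟩ := rho_pos v hvX
      have hcard : c v + 1 ≤ (T.children v ∩ X ∩ G m).ncard := by
        rcases hPm.2 with h | h
        · rw [Set.inter_eq_self_of_subset_left h]
          have h1 : (c v : ℤ) ≤ ((T.children v ∩ X).ncard : ℤ) - 1 := by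
            rw [RTree.A, if_pos ⟨hvX, hvroot⟩] at hv
            exact hv
          have h2 : (c v : ℤ) + 1 ≤ ((T.children v ∩ X).ncard : ℤ) := by linarith
          exact_mod_cast h2
        · exact h
      have hsub2 : T.children v ∩ X ∩ G m ⊆ T.children v ∩ X' := by
        intro x hx
        refine ⟨hx.1.1, hx.1.2, Or.inr (Or.inr ?_)⟩
        rw [hx.1.1.1]
        have := rho_le x m hx.2
        omega
      have hcard2 : c v + 1 ≤ (T.children v ∩ X').ncard :=
        hcard.trans (Set.ncard_le_ncard hsub2 ((T.locFin v).inter_of_left _))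
      have hfinal : (c v : ℤ) + 1 ≤ ((T.children v ∩ X').ncard : ℤ) := by exact_mod_cast hcard2
      rw [RTree.A]
      split_ifs with h <;> linarith
    · have hv' : v ∉ X ∨ v = T.root := by tauto
      rw [hter v hv']
      exact hv
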